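/- arXiv:2111.15059 — 3 statements merged into one kernel-verified Lean document; each statement's English description precedes it below -/
import Mathlib

section
/- Let g2, g3 ∈ ℂ and let p1, p2, p3 ∈ ℂ be pairwise distinct. Suppose there exists ℧ ∈ ℂ such that 4·p1³ − g2·p1 − g3 = ℧·(p2 − p3)², 4·p2³ − g2·p2 − g3 = ℧·(p1 − p3)², and 4·p3³ − g2·p3 − g3 = ℧·(p1 − p2)². Let s1 = p1 + p2 + p3, s2 = p1·p2 + p1·p3 + p2·p3, s3 = p1·p2·p3. Then ℧ = −(4/3)·s1, s2 = (2/3)·s1² − (1/4)·g2, and s3 = (5/9)·s1³ − (1/3)·g2·s1 + (1/4)·g3. -/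
theorem stmt_4 (g2 g3 p1 p2 p3 mho : ℂ)
    (h12 : p1 ≠ p2) (h13 : p1 ≠ p3) (h23 : p2 ≠ p3)
    (h1 : 4 * p1 ^ 3 - g2 * p1 - g3 = mho * (p2 - p3) ^ 2)
    (h2 : 4 * p2 ^ 3 - g2 * p2 - g3 = mho * (p1 - p3) ^ 2)
    (h3 : 4 * p3 ^ 3 - g2 * p3 - g3 = mho * (p1 - p2) ^ 2)
    (s1 s2 s3 : ℂ)
    (hs1 : s1 = p1 + p2 + p3)
    (hs2 : s2 = p1 * p2 + p1 * p3 + p2 * p3)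
    (hs3 : s3 = p1 * p2 * p3) :
    mho = -(4 / 3) * s1 ∧
    s2 = (2 / 3) * s1 ^ 2 - (1 / 4) * g2 ∧
    s3 = (5 / 9) * s1 ^ 3 - (1 / 3) * g2 * s1 + (1 / 4) * g3 := by
  have h12' : p1 - p2 ≠ 0 := sub_ne_zero.mpr h12
  have h13' : p1 - p3 ≠ 0 := sub_ne_zero.mpr h13
  have h23' : p2 - p3 ≠ 0 := sub_ne_zero.mpr h23
  subst hs1 hs2 hs3
  have key : (p1 - p2) * ((p1 - p3) * ((p2 - p3) *
      (3 * mho + 4 * (p1 + p2 + p3)))) = 0 := by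
    linear_combination ((p1 - p3) - (p1 - p2)) * h1 - (p1 - p3) * h2 + (p1 - p2) * h3
  have h0 : 3 * mho + 4 * (p1 + p2 + p3) = 0 := by
    by_contra h0
    exact mul_ne_zero h12' (mul_ne_zero h13' (mul_ne_zero h23' h0)) key
  have hm : mho = -(4 / 3) * (p1 + p2 + p3) := by linear_combination (1 / 3) * h0
  subst hm
  have key2 : (p1 - p2) * (4 * (p1 * p2 + p1 * p3 + p2 * p3) -
      (8 / 3) * (p1 + p2 + p3) ^ 2 + g2) = 0 := by
    linear_combination h2 - h1
  have h2eq : p1 * p2 + p1 * p3 + p2 * p3 =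
      (2 / 3) * (p1 + p2 + p3) ^ 2 - (1 / 4) * g2 := by
    have := (mul_eq_zero.mp key2).resolve_left h12'
    linear_combination (1 / 4) * this
  refine ⟨rfl, h2eq, ?_⟩
  linear_combination (1 / 12) * h1 + (1 / 12) * h2 + (1 / 12) * h3 +
    (5 / 3) * (p1 + p2 + p3) * h2eq
end

section
/- Let e1 ∈ ℝ, η1 ∈ ℝ, g2 ∈ ℝ with g2 < 3·e1², 5·g2 − 12·e1² > 0, and e1² − 4·e1·η1 − (5/12)·g2 ≠ 0. Set g3 = 4·e1³ − e1·g2, let ϑ± = 3·e1 ± (1/2)·√(12·(5g2 − 12e1²)) be the roots of R1(λ) = λ² − 6e1λ + 15(3e1² − g2), and let f(λ) = (4/15)λ³ + (8/5)η1λ² − 3g2λ + 9g3 − 6η1g2. Then f(ϑ−)·f(ϑ+) = (3·B²·(5g2 − 12e1²) / (4·(e1² − 4e1η1 − (5/12)g2)²)) · (3·(5g2 − 12e1²)·(e1 + η1)² − 4·(e1² − 4e1η1 − (5/12)g2)²), where B = g2 + (48/5)·η1·e1 − (12/5)·e1². -/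
theorem stmt_13 (e1 eta1 g2 g3 : ℝ)
    (hlt : g2 < 3 * e1 ^ 2)
    (hdisc : 0 < 5 * g2 - 12 * e1 ^ 2)
    (hden : e1 ^ 2 - 4 * e1 * eta1 - (5 / 12) * g2 ≠ 0)
    (hg3 : g3 = 4 * e1 ^ 3 - e1 * g2)
    (ϑm ϑp : ℝ)
    (hm : ϑm = 3 * e1 - (1 / 2) * Real.sqrt (12 * (5 * g2 - 12 * e1 ^ 2)))
    (hp : ϑp = 3 * e1 + (1 / 2) * Real.sqrt (12 * (5 * g2 - 12 * e1 ^ 2)))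
    (f : ℝ → ℝ)
    (hf : f = fun lam =>
      (4 / 15) * lam ^ 3 + (8 / 5) * eta1 * lam ^ 2 - 3 * g2 * lam
        + 9 * g3 - 6 * eta1 * g2)
    (B : ℝ) (hB : B = g2 + (48 / 5) * eta1 * e1 - (12 / 5) * e1 ^ 2) :
    f ϑm * f ϑp =
      (3 * B ^ 2 * (5 * g2 - 12 * e1 ^ 2)
          / (4 * (e1 ^ 2 - 4 * e1 * eta1 - (5 / 12) * g2) ^ 2)) *
        (3 * (5 * g2 - 12 * e1 ^ 2) * (e1 + eta1) ^ 2
          - 4 * (e1 ^ 2 - 4 * e1 * eta1 - (5 / 12) * g2) ^ 2) := by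
  set S := Real.sqrt (12 * (5 * g2 - 12 * e1 ^ 2)) with hSdef
  have hS : S ^ 2 = 12 * (5 * g2 - 12 * e1 ^ 2) :=
    Real.sq_sqrt (by nlinarith)
  have h4 : (4 * (e1 ^ 2 - 4 * e1 * eta1 - (5 / 12) * g2) ^ 2) ≠ 0 := by
    positivity
  rw [div_mul_eq_mul_div, eq_div_iff h4]
  subst hf hg3 hm hp hB
  simp only
  linear_combination ((-1/1296) * g2^2 * S^4 + (5/216) * g2^3 * S^2 + (-25/144) * g2^4 + (1/9) * eta1^2 * g2^2 * S^2 + (10/3) * eta1^2 * g2^3 + (-2/135) * e1 * eta1 * g2 * S^4 + (5/9) * e1 * eta1 * g2^2 * S^2 + (-5/3) * e1 * eta1 * g2^3 + (32/15) * e1 * eta1^3 * g2 * S^2 + 64 * e1 * eta1^3 * g2^2 + (1/270) * e1^2 * g2 * S^4 + (1/12) * e1^2 * g2^2 * S^2 + (5/3) * e1^2 * g2^3 + (-16/225) * e1^2 * eta1^2 * S^4 + (56/15) * e1^2 * eta1^2 * g2 * S^2 + (-24) * e1^2 * eta1^2 * g2^2 + (256/25) * e1^2 * eta1^4 * S^2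 + (1536/5) * e1^2 * eta1^4 * g2 + (8/225) * e1^3 * eta1 * S^4 + (32/15) * e1^3 * eta1 * g2 * S^2 + 12 * e1^3 * eta1 * g2^2 + (128/25) * e1^3 * eta1^3 * S^2 + (-2304/5) * e1^3 * eta1^3 * g2 + (-1/225) * e1^4 * S^4 + (-4/5) * e1^4 * g2 * S^2 + (-6) * e1^4 * g2^2 + (336/25) * e1^4 * eta1^2 * S^2 + (288/5) * e1^4 * eta1^2 * g2 + (-55296/25) * e1^4 * eta1^4 + (-208/25) * e1^5 * eta1 * S^2 + (-144/5) * e1^5 * eta1 * g2 + (18432/25) * e1^5 * eta1^3 + (28/25) * e1^6 * S^2 + (48/5) * e1^6 * g2 + (-1152/25) * e1^6 * eta1^2 + (576/25) * e1^7 * eta1 + (-144/25) * e1^8) * hS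
end

section
/- Let e1, e2, e3, g2 ∈ ℂ satisfy e1 + e2 + e3 = 0 and g2 = 2(e1² + e2² + e3²), with e1, e2, e3 pairwise distinct. Then for each k ∈ {1, 2, 3}, R_k(0) = 15·(3·e_k² − g2) ≠ 0; consequently 0 is a simple root of the genus-3 Lamé spectral polynomial Q3(λ) = λ·∏_{k=1}^{3}(λ² − 6·e_k·λ + 15·(3·e_k² − g2)). -/
theorem stmt_14 (e1 e2 e3 g2 : ℂ)
    (h12 : e1 ≠ e2) (h13 : e1 ≠ e3) (h23 : e2 ≠ e3)
    (hsum : e1 + e2 + e3 = 0)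
    (hg2 : g2 = 2 * (e1 ^ 2 + e2 ^ 2 + e3 ^ 2))
    (Q3 : ℂ → ℂ)
    (hQ3 : Q3 = fun lam => lam *
      ((lam ^ 2 - 6 * e1 * lam + 15 * (3 * e1 ^ 2 - g2)) *
       ((lam ^ 2 - 6 * e2 * lam + 15 * (3 * e2 ^ 2 - g2)) *
        (lam ^ 2 - 6 * e3 * lam + 15 * (3 * e3 ^ 2 - g2))))) :
    15 * (3 * e1 ^ 2 - g2) ≠ 0 ∧
    15 * (3 * e2 ^ 2 - g2) ≠ 0 ∧
    15 * (3 * e3 ^ 2 - g2) ≠ 0 ∧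
    Q3 0 = 0 ∧ deriv Q3 0 ≠ 0 := by
  have k1 : 15 * (3 * e1 ^ 2 - g2) = -15 * (e2 - e3) ^ 2 := by
    rw [hg2]; linear_combination (15 * (e1 - e2 - e3)) * hsum
  have k2 : 15 * (3 * e2 ^ 2 - g2) = -15 * (e1 - e3) ^ 2 := by
    rw [hg2]; linear_combination (15 * (e2 - e1 - e3)) * hsum
  have k3 : 15 * (3 * e3 ^ 2 - g2) = -15 * (e1 - e2) ^ 2 := by
    rw [hg2]; linear_combination (15 * (e3 - e1 - e2)) * hsum
  have n1 : 15 * (3 * e1 ^ 2 - g2) ≠ 0 := by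
    rw [k1]
    exact mul_ne_zero (by norm_num) (pow_ne_zero _ (sub_ne_zero.mpr h23))
  have n2 : 15 * (3 * e2 ^ 2 - g2) ≠ 0 := by
    rw [k2]
    exact mul_ne_zero (by norm_num) (pow_ne_zero _ (sub_ne_zero.mpr h13))
  have n3 : 15 * (3 * e3 ^ 2 - g2) ≠ 0 := by
    rw [k3]
    exact mul_ne_zero (by norm_num) (pow_ne_zero _ (sub_ne_zero.mpr h12))
  refine ⟨n1, n2, n3, by simp [hQ3], ?_⟩
  set f : ℂ → ℂ := fun lam =>
      ((lam ^ 2 - 6 * e1 * lam + 15 * (3 * e1 ^ 2 - g2)) *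
       ((lam ^ 2 - 6 * e2 * lam + 15 * (3 * e2 ^ 2 - g2)) *
        (lam ^ 2 - 6 * e3 * lam + 15 * (3 * e3 ^ 2 - g2)))) with hf
  have hdf : Differentiable ℂ f := by
    apply Differentiable.mul
    · fun_prop
    · exact Differentiable.mul (by fun_prop) (by fun_prop)
  have : deriv Q3 0 = f 0 := by
    rw [hQ3]
    have := (deriv_fun_mul (differentiable_id.differentiableAt (x := (0:ℂ)))
      (hdf 0))
    simp only [hf, id_eq, deriv_id'] at this ⊢
    rw [this]
    simp
  rw [this, hf]
  simp only
  norm_num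
  exact ⟨fun h => n1 (by rw [h]; ring), fun h => n2 (by rw [h]; ring),
    fun h => n3 (by rw [h]; ring)⟩
end
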